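/- Every element g of GL₂(A_{f,F}) can be written as g = m·n⁻¹ where m and n both belong to M₂(Ô_F)^♮; that is, M₂(Ô_F)^♮ · (M₂(Ô_F)^♮)⁻¹ = GL₂(A_{f,F}). -/

import Mathlib

open IsDedekindDomain IsDedekindDomain.HeightOneSpectrum NumberField
open scoped nonZeroDivisors

set_option synthInstance.maxHeartbeats 400000
set_option maxHeartbeats 1000000

noncomputable section

variable (F : Type) [Field F] [NumberField F]

/-- The finite adele ring of the number field `F`. -/
abbrev AF := FiniteAdeleRing (𝓞 F) F

/-- A finite adele is integral if all its components are integral. -/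
def IsIntegralAdele (x : AF F) : Prop :=
  ∀ v : HeightOneSpectrum (𝓞 F), x v ∈ v.adicCompletionIntegers F

/-- Evaluation of a finite adele at a finite place, as a ring homomorphism. -/
def evalAt (v : HeightOneSpectrum (𝓞 F)) : AF F →+* v.adicCompletion F where
  toFun x := x v
  map_one' := rfl
  map_mul' _ _ := rfl
  map_zero' := rfl
  map_add' _ _ := rfl

/-- 2×2 matrices over the finite adele ring. -/
abbrev M2A := Matrix (Fin 2) (Fin 2) (AF F)

/-- M₂(Ô_F)^♮: the submonoid of GL₂(A_{f,F}) of invertible matrices all of whose entries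
are integral. -/
def m2Nat : Submonoid (M2A F)ˣ where
  carrier := {m | ∀ i j, IsIntegralAdele F ((m : M2A F) i j)}
  one_mem' := by
    intro i j v
    show evalAt F v (((1 : (M2A F)ˣ) : M2A F) i j) ∈ _
    rw [Units.val_one, Matrix.one_apply]
    split_ifs
    · rw [map_one]; exact one_mem _
    · rw [map_zero]; exact zero_mem _
  mul_mem' := by
    intro a b ha hb i j v
    show evalAt F v (((a * b : (M2A F)ˣ) : M2A F) i j) ∈ _
    rw [Units.val_mul, Matrix.mul_apply, map_sum]
    exact sum_mem fun k _ => mul_mem (ha i k v) (hb k j v)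

/-- The scalar matrix attached to an element of F^×, as an element of GL₂(A_{f,F}). -/
def scalarUnit : Fˣ →* (M2A F)ˣ :=
  Units.map ((Matrix.scalar (Fin 2)).comp (algebraMap F (AF F))).toMonoidHom

lemma isIntegralAdele_algebraMap (r : 𝓞 F) :
    IsIntegralAdele F (algebraMap (𝓞 F) (AF F) r) := fun v =>
  coe_mem_adicCompletionIntegers v r

lemma isIntegralAdele_mul {x y : AF F} (hx : IsIntegralAdele F x)
    (hy : IsIntegralAdele F y) : IsIntegralAdele F (x * y) := fun v =>
  mul_mem (hx v) (hy v)

lemma exists_denominator (x : AF F) :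
    ∃ b : (𝓞 F)⁰, IsIntegralAdele F (x * algebraMap (𝓞 F) (AF F) (b : 𝓞 F)) := by
  classical
  have hfin : Set.Finite {v : HeightOneSpectrum (𝓞 F) | x v ∉ v.adicCompletionIntegers F} := by
    have h : ∀ᶠ v in Filter.cofinite, x v ∈ v.adicCompletionIntegers F := x.2
    exact h
  choose c hc hcv using fun v : HeightOneSpectrum (𝓞 F) =>
    adicCompletion.mul_nonZeroDivisor_mem_adicCompletionIntegers v (x v)
  refine ⟨⟨∏ v ∈ hfin.toFinset, c v, prod_mem fun v _ => hc v⟩, ?_⟩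
  intro v
  have hev : (x * algebraMap (𝓞 F) (AF F) (∏ w ∈ hfin.toFinset, c w)) v =
      x v * algebraMap (𝓞 F) (v.adicCompletion F) (∏ w ∈ hfin.toFinset, c w) := rfl
  show (x * algebraMap (𝓞 F) (AF F) (∏ w ∈ hfin.toFinset, c w)) v ∈ _
  rw [hev]
  by_cases hv : v ∈ hfin.toFinset
  · rw [← Finset.mul_prod_erase _ c hv, map_mul, ← mul_assoc]
    exact mul_mem (hcv v) (coe_mem_adicCompletionIntegers v _)
  · have hx : x v ∈ v.adicCompletionIntegers F := by simpa using hv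
    exact mul_mem hx (coe_mem_adicCompletionIntegers v _)

/-- Every element of GL₂(A_{f,F}) is of the form m·n⁻¹ with m, n ∈ M₂(Ô_F)^♮:
M₂(Ô_F)^♮ · (M₂(Ô_F)^♮)⁻¹ = GL₂(A_{f,F}). -/
theorem m2Nat_mul_m2Nat_inv_eq_GL2 (g : (M2A F)ˣ) :
    ∃ m ∈ m2Nat F, ∃ n ∈ m2Nat F, g = m * n⁻¹ := by
  choose b hb using fun p : Fin 2 × Fin 2 => exists_denominator F ((g : M2A F) p.1 p.2)
  set d : 𝓞 F := ∏ p : Fin 2 × Fin 2, (b p : 𝓞 F) with hd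
  have hd0 : d ∈ (𝓞 F)⁰ := prod_mem fun p _ => (b p).2
  have hdF : algebraMap (𝓞 F) F d ≠ 0 :=
    IsFractionRing.to_map_ne_zero_of_mem_nonZeroDivisors hd0
  set u : Fˣ := Units.mk0 _ hdF with hu
  set n : (M2A F)ˣ := scalarUnit F u with hnval
  have hnmat : (n : M2A F) = Matrix.diagonal (fun _ => algebraMap (𝓞 F) (AF F) d) := by
    show Matrix.scalar (Fin 2) (algebraMap F (AF F) (algebraMap (𝓞 F) F d)) = _
    rw [Matrix.scalar_apply, ← IsScalarTower.algebraMap_apply]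
  have hn : n ∈ m2Nat F := by
    intro i j v
    rw [hnmat, Matrix.diagonal_apply]
    split_ifs
    · exact isIntegralAdele_algebraMap F d v
    · exact zero_mem _
  have hm : g * n ∈ m2Nat F := by
    intro i j
    rw [Units.val_mul, hnmat, Matrix.mul_diagonal]
    have hsplit : d = (b (i, j) : 𝓞 F) * ∏ p ∈ Finset.univ.erase (i, j), (b p : 𝓞 F) := by
      rw [hd]; exact (Finset.mul_prod_erase _ _ (Finset.mem_univ (i, j))).symm
    rw [hsplit, map_mul, ← mul_assoc]
    exact isIntegralAdele_mul F (hb (i, j)) (isIntegralAdele_algebraMap F _)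
  exact ⟨g * n, hm, n, hn, by rw [mul_inv_cancel_right]⟩
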